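/- arXiv:2507.12656 — 4 statements merged into one kernel-verified Lean document; each statement's English description precedes it below -/
import Mathlib

section
/- Let $(X, \mathcal{A}, \mu)$ be a measure space with $\mu(X) < \infty$, and let $\nu$ be a Lévy measure on $\mathbb{R}$, i.e. a Borel measure with $\nu(\{0\}) = 0$ and $\int_{\mathbb{R}} (|z|^2 \wedge 1)\,\nu(dz) < \infty$. Let $p \in (0,2]$ and let $g : X \to [0,\infty]$ be measurable with $\int_X g(x)^p\,\mu(dx) < \infty$ and $\int_{\{0 < |z| \le 1\}} |z|^p\,\nu(dz) < \infty$. Then $\int_X \int_{\mathbb{R}} \bigl( |z\,g(x)|^2 \wedge 1 \bigr)\,\nu(dz)\,\mu(dx) < \infty$. -/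
open MeasureTheory ENNReal Set

lemma aux_pointwise (a b : ℝ≥0∞) {p : ℝ} (hp0 : 0 < p) (hp2 : p ≤ 2) :
    min ((a * b) ^ 2) 1 ≤ min (a ^ 2) 1 + b ^ p * min (a ^ p) 1 := by
  rcases le_or_gt b 1 with hb | hb
  · refine le_add_right (min_le_min ?_ le_rfl)
    calc (a * b) ^ 2 ≤ (a * 1) ^ 2 := by gcongr
      _ = a ^ 2 := by rw [mul_one]
  · refine le_trans ?_ (self_le_add_left _ _)
    rcases le_or_gt (a * b) 1 with hab | hab
    · have ha1 : a ≤ 1 := by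
        calc a = a * 1 := (mul_one a).symm
          _ ≤ a * b := by gcongr
          _ ≤ 1 := hab
      have h1 : min ((a * b) ^ 2) 1 ≤ (a * b) ^ 2 := min_le_left _ _
      have h2 : (a * b) ^ 2 ≤ (a * b) ^ p := by
        rw [← ENNReal.rpow_two]
        exact ENNReal.rpow_le_rpow_of_exponent_ge hab hp2
      have h3 : (a * b) ^ p = b ^ p * a ^ p := by
        rw [ENNReal.mul_rpow_of_nonneg _ _ hp0.le, mul_comm]
      have h4 : min (a ^ p) 1 = a ^ p :=
        min_eq_left (ENNReal.rpow_le_one ha1 hp0.le)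
      rw [h4]
      exact h1.trans (h2.trans h3.le)
    · refine (min_le_right _ 1).trans ?_
      rcases le_total (a ^ p) 1 with h | h
      · rw [min_eq_left h, ← ENNReal.mul_rpow_of_nonneg _ _ hp0.le]
        exact ENNReal.one_le_rpow (by rw [mul_comm]; exact hab.le) hp0
      · rw [min_eq_right h]
        calc (1 : ℝ≥0∞) = 1 * 1 := (one_mul 1).symm
          _ ≤ b ^ p * 1 := by gcongr; exact ENNReal.one_le_rpow hb.le hp0
/-- Rajput–Rosinski integrability criterion. If `μ` is a finite measure,
`ν` a Lévy measure on `ℝ`, `p ∈ (0,2]`, `g ≥ 0` measurable with `∫ g^p dμ < ∞` and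
`∫_{0<|z|≤1} |z|^p ν(dz) < ∞`, then `∫∫ (|z g(x)|² ∧ 1) ν(dz) μ(dx) < ∞`. -/
theorem stmt_2
    {X : Type*} [MeasurableSpace X] (μ : Measure X) [IsFiniteMeasure μ]
    (ν : Measure ℝ) (hν0 : ν {0} = 0)
    (hν : ∫⁻ z, min (ENNReal.ofReal (z ^ 2)) 1 ∂ν < ⊤)
    (p : ℝ) (hp0 : 0 < p) (hp2 : p ≤ 2)
    (g : X → ℝ≥0∞) (hg : Measurable g)
    (hgp : ∫⁻ x, g x ^ p ∂μ < ⊤)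
    (hνp : ∫⁻ z in {z : ℝ | 0 < |z| ∧ |z| ≤ 1}, ENNReal.ofReal (|z| ^ p) ∂ν < ⊤) :
    ∫⁻ x, ∫⁻ z, min ((ENNReal.ofReal |z| * g x) ^ 2) 1 ∂ν ∂μ < ⊤ := by
  set C1 := ∫⁻ z, min (ENNReal.ofReal (z ^ 2)) 1 ∂ν with hC1def
  set C2 := ∫⁻ z, min (ENNReal.ofReal (|z| ^ p)) 1 ∂ν with hC2def
  have hmeas1 : Measurable fun z : ℝ => min (ENNReal.ofReal (z ^ 2)) 1 := by fun_prop
  have hmeas2 : Measurable fun z : ℝ => min (ENNReal.ofReal (|z| ^ p)) 1 := by fun_prop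
  have hmeass : MeasurableSet {z : ℝ | 0 < |z| ∧ |z| ≤ 1} :=
    (measurableSet_lt measurable_const measurable_abs).inter
      (measurableSet_le measurable_abs measurable_const)
  -- C2 < ∞
  have hC2 : C2 < ⊤ := by
    have hpt : ∀ z : ℝ, min (ENNReal.ofReal (|z| ^ p)) 1 ≤
        ({z : ℝ | 0 < |z| ∧ |z| ≤ 1}).indicator (fun z => ENNReal.ofReal (|z| ^ p)) z
          + min (ENNReal.ofReal (z ^ 2)) 1 := by
      intro z
      rcases eq_or_ne z 0 with rfl | hz0
      · simp [Real.zero_rpow hp0.ne']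
      rcases le_or_gt (|z|) 1 with hz1 | hz1
      · refine le_add_right ?_
        rw [indicator_of_mem (by exact ⟨abs_pos.2 hz0, hz1⟩)]
        exact min_le_left _ _
      · refine le_trans (min_le_right _ _) (le_trans ?_ (self_le_add_left _ _))
        rw [min_eq_right]
        rw [show (1:ℝ≥0∞) = ENNReal.ofReal 1 by simp]
        apply ENNReal.ofReal_le_ofReal
        nlinarith [abs_nonneg z, sq_abs z]
    calc C2 ≤ ∫⁻ z, (({z : ℝ | 0 < |z| ∧ |z| ≤ 1}).indicator (fun z => ENNReal.ofReal (|z| ^ p)) z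
          + min (ENNReal.ofReal (z ^ 2)) 1) ∂ν := lintegral_mono hpt
      _ = ∫⁻ z in {z : ℝ | 0 < |z| ∧ |z| ≤ 1}, ENNReal.ofReal (|z| ^ p) ∂ν + C1 := by
          rw [lintegral_add_right _ hmeas1, lintegral_indicator hmeass]
      _ < ⊤ := ENNReal.add_lt_top.2 ⟨hνp, hν⟩
  have key : ∀ x, ∫⁻ z, min ((ENNReal.ofReal |z| * g x) ^ 2) 1 ∂ν ≤ C1 + g x ^ p * C2 := by
    intro x
    calc ∫⁻ z, min ((ENNReal.ofReal |z| * g x) ^ 2) 1 ∂ν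
        ≤ ∫⁻ z, (min (ENNReal.ofReal (z ^ 2)) 1 + g x ^ p * min (ENNReal.ofReal (|z| ^ p)) 1) ∂ν := by
          apply lintegral_mono
          intro z
          dsimp only
          have e1 : ENNReal.ofReal (z ^ 2) = (ENNReal.ofReal |z|) ^ 2 := by
            rw [← sq_abs, ENNReal.ofReal_pow (abs_nonneg z)]
          have e2 : ENNReal.ofReal (|z| ^ p) = (ENNReal.ofReal |z|) ^ p :=
            (ENNReal.ofReal_rpow_of_nonneg (abs_nonneg z) hp0.le).symm
          rw [e1, e2]
          exact aux_pointwise _ _ hp0 hp2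
      _ = C1 + g x ^ p * C2 := by
          rw [lintegral_add_left hmeas1, lintegral_const_mul _ hmeas2]
  calc ∫⁻ x, ∫⁻ z, min ((ENNReal.ofReal |z| * g x) ^ 2) 1 ∂ν ∂μ
      ≤ ∫⁻ x, (C1 + g x ^ p * C2) ∂μ := lintegral_mono key
    _ = C1 * μ Set.univ + (∫⁻ x, g x ^ p ∂μ) * C2 := by
        rw [lintegral_add_left measurable_const, lintegral_const,
          lintegral_mul_const _ (hg.pow_const p)]
    _ < ⊤ := ENNReal.add_lt_top.2 ⟨ENNReal.mul_lt_top hν (measure_lt_top μ _),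
        ENNReal.mul_lt_top hgp hC2⟩
end

section
/- Let $d \ge 4$, let $D \subset \mathbb{R}^d$ be a bounded measurable set, let $C > 0$, and let $G : D \times D \to [0,\infty]$ be measurable with $G(x,y) \le C\,\|x-y\|^{2-d}$ for all $x,y \in D$ with $x \neq y$. Let $\nu$ be a Lévy measure on $\mathbb{R}$ (i.e. $\nu(\{0\}) = 0$ and $\int_{\mathbb{R}}(|z|^2\wedge 1)\,\nu(dz) < \infty$) such that $\int_{\{0<|z|\le 1\}} |z|^p\,\nu(dz) < \infty$ for some $p \in \bigl(0, \tfrac{d}{d-2}\bigr)$. Then for every $x \in D$, $\int_D \int_{\mathbb{R}} \bigl( |z\,G(x,y)|^2 \wedge 1 \bigr)\,\nu(dz)\,dy < \infty$. -/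
open MeasureTheory ENNReal Set

lemma riesz_lt_top (d : ℕ) (hd : 0 < d) (x : EuclideanSpace ℝ (Fin d)) (R s : ℝ)
    (hR : 0 < R) (hs0 : 0 ≤ s) (hsd : s < d) :
    ∫⁻ y in Metric.closedBall x R, ENNReal.ofReal (‖x - y‖ ^ (-s)) ∂volume < ⊤ := by
  set c : ℝ := 2⁻¹ with hc
  have hc0 : (0:ℝ) < c := by norm_num
  have hc1 : c < 1 := by norm_num
  set A : ℕ → Set (EuclideanSpace ℝ (Fin d)) := fun n =>
    Metric.closedBall x (R * c ^ n) \ Metric.closedBall x (R * c ^ (n+1)) with hA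
  have hcover : Metric.closedBall x R ⊆ {x} ∪ ⋃ n, A n := by
    intro y hy
    rcases eq_or_ne y x with h | h
    · exact Or.inl h
    · right
      have ht0 : 0 < dist y x := dist_pos.2 h
      have htR : dist y x ≤ R := Metric.mem_closedBall.1 hy
      have hex : ∃ n, R * c ^ n < dist y x := by
        obtain ⟨n, hn⟩ := exists_pow_lt_of_lt_one (div_pos ht0 hR) hc1
        exact ⟨n, by rwa [lt_div_iff₀' hR] at hn⟩
      classical
      have hfind : Nat.find hex ≠ 0 := by
        intro h0
        have hsp := Nat.find_spec hex
        rw [h0] at hsp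
        simp at hsp
        linarith
      obtain ⟨m, hm⟩ := Nat.exists_eq_succ_of_ne_zero hfind
      refine mem_iUnion.2 ⟨m, ?_, ?_⟩
      · have := Nat.find_min hex (m := m) (by omega)
        push_neg at this
        exact Metric.mem_closedBall.2 this
      · have := Nat.find_spec hex
        rw [hm] at this
        simp only [Metric.mem_closedBall, not_le]
        exact this
  have hsingle : volume ({x} : Set (EuclideanSpace ℝ (Fin d))) = 0 := by
    haveI : Nontrivial (EuclideanSpace ℝ (Fin d)) := by
      apply Module.nontrivial_of_finrank_pos (R := ℝ)
      rw [finrank_euclideanSpace_fin]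
      exact hd
    exact measure_singleton x
  have hB : volume (Metric.ball (0 : EuclideanSpace ℝ (Fin d)) 1) < ⊤ := measure_ball_lt_top
  set B := volume (Metric.ball (0 : EuclideanSpace ℝ (Fin d)) 1) with hBdef
  set q : ℝ≥0∞ := ENNReal.ofReal (c ^ ((d:ℝ) - s)) with hq
  set K : ℝ≥0∞ := ENNReal.ofReal (R ^ ((d:ℝ) - s) * c ^ (-s)) with hK
  have hterm : ∀ n, ∫⁻ y in A n, ENNReal.ofReal (‖x - y‖ ^ (-s)) ∂volume ≤ K * q ^ n * B := by
    intro n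
    have hbound : ∀ y ∈ A n, ENNReal.ofReal (‖x - y‖ ^ (-s))
        ≤ ENNReal.ofReal ((R * c ^ (n+1)) ^ (-s)) := by
      intro y hy
      apply ENNReal.ofReal_le_ofReal
      have h1 : R * c ^ (n+1) < dist y x := by
        have := hy.2
        simpa [Metric.mem_closedBall, not_le] using this
      have h2 : ‖x - y‖ = dist y x := by rw [dist_eq_norm, norm_sub_rev]
      rw [h2]
      exact Real.rpow_le_rpow_of_nonpos (by positivity) h1.le (by linarith)
    calc ∫⁻ y in A n, ENNReal.ofReal (‖x - y‖ ^ (-s)) ∂volume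
        ≤ ∫⁻ _ in A n, ENNReal.ofReal ((R * c ^ (n+1)) ^ (-s)) ∂volume :=
          setLIntegral_mono measurable_const hbound
      _ = ENNReal.ofReal ((R * c ^ (n+1)) ^ (-s)) * volume (A n) := setLIntegral_const _ _
      _ ≤ ENNReal.ofReal ((R * c ^ (n+1)) ^ (-s)) *
            (ENNReal.ofReal ((R * c ^ n) ^ d) * B) := by
          gcongr
          have : volume (A n) ≤ volume (Metric.closedBall x (R * c ^ n)) :=
            measure_mono diff_subset
          rwa [Measure.addHaar_closedBall _ _ (by positivity), finrank_euclideanSpace_fin]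
            at this
      _ = K * q ^ n * B := by
          rw [← mul_assoc]
          congr 1
          rw [← ENNReal.ofReal_mul (by positivity), hK, hq,
            ← ENNReal.ofReal_pow (by positivity), ← ENNReal.ofReal_mul (by positivity)]
          congr 1
          rw [← Real.rpow_natCast (R * c ^ n) d,
            Real.mul_rpow hR.le (by positivity), Real.mul_rpow hR.le (by positivity),
            ← Real.rpow_natCast c (n+1), ← Real.rpow_natCast c n,
            ← Real.rpow_mul hc0.le, ← Real.rpow_mul hc0.le,
            ← Real.rpow_natCast (c ^ ((d:ℝ) - s)) n, ← Real.rpow_mul hc0.le]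
          push_cast
          have hR2 : R ^ (-s) * R ^ ((d:ℝ)) = R ^ ((d:ℝ) - s) := by
            rw [← Real.rpow_add hR]; ring_nf
          have hc2 : c ^ (((n:ℝ) + 1) * -s) * c ^ ((n:ℝ) * (d:ℝ))
              = c ^ (-s) * c ^ (((d:ℝ) - s) * (n:ℝ)) := by
            rw [← Real.rpow_add hc0, ← Real.rpow_add hc0]
            congr 1; ring
          linear_combination (c ^ (((n:ℝ) + 1) * -s) * c ^ ((n:ℝ) * (d:ℝ))) * hR2
            + (R ^ ((d:ℝ) - s)) * hc2
  have hq1 : q < 1 := by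
    rw [hq]
    apply ENNReal.ofReal_lt_one.2
    exact Real.rpow_lt_one hc0.le hc1 (by push_cast; linarith)
  calc ∫⁻ y in Metric.closedBall x R, ENNReal.ofReal (‖x - y‖ ^ (-s)) ∂volume
      ≤ ∫⁻ y in {x} ∪ ⋃ n, A n, ENNReal.ofReal (‖x - y‖ ^ (-s)) ∂volume :=
        lintegral_mono_set hcover
    _ ≤ (∫⁻ y in {x}, ENNReal.ofReal (‖x - y‖ ^ (-s)) ∂volume) +
        ∫⁻ y in ⋃ n, A n, ENNReal.ofReal (‖x - y‖ ^ (-s)) ∂volume := lintegral_union_le _ _ _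
    _ ≤ 0 + ∑' n, ∫⁻ y in A n, ENNReal.ofReal (‖x - y‖ ^ (-s)) ∂volume := by
        gcongr
        · rw [setLIntegral_measure_zero _ _ hsingle]
        · exact lintegral_iUnion_le _ _
    _ ≤ 0 + ∑' n, K * q ^ n * B := by gcongr with n; exact hterm n
    _ = K * B * ∑' n, q ^ n := by
        rw [zero_add]
        rw [← ENNReal.tsum_mul_left]
        congr 1; ext n; ring
    _ < ⊤ := by
        rw [ENNReal.tsum_geometric]
        refine ENNReal.mul_lt_top (ENNReal.mul_lt_top ofReal_lt_top hB) ?_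
        exact ENNReal.inv_lt_top.2 (tsub_pos_of_lt hq1)

private lemma min_sq_le_rpow {p : ℝ} (hp0 : 0 < p) (hp2 : p ≤ 2) (b : ℝ≥0∞) :
    min (b ^ 2) 1 ≤ b ^ p := by
  rcases le_or_gt b 1 with hb | hb
  · refine (min_le_left _ _).trans ?_
    have h2 : b ^ (2 : ℕ) = b ^ ((2 : ℕ) : ℝ) := (ENNReal.rpow_natCast b 2).symm
    rw [h2]
    exact ENNReal.rpow_le_rpow_of_exponent_ge hb (by exact_mod_cast hp2)
  · exact (min_le_right _ _).trans (ENNReal.one_le_rpow hb.le hp0)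

/-- For `d ≥ 4`, a bounded measurable `D ⊆ ℝ^d`, a kernel `G` dominated by
`C‖x-y‖^{2-d}` off the diagonal, and a Lévy measure `ν` on `ℝ` with
`∫_{0<|z|≤1}|z|^p ν(dz) < ∞` for some `p ∈ (0, d/(d-2))`, the Rajput–Rosinski criterion
`∫_D ∫_ℝ (|z G(x,y)|² ∧ 1) ν(dz) dy < ∞` holds for every `x ∈ D`. -/
theorem stmt_3
    (d : ℕ) (hd : 4 ≤ d)
    (D : Set (EuclideanSpace ℝ (Fin d)))
    (hDm : MeasurableSet D) (hDb : Bornology.IsBounded D)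
    (C : ℝ) (hC : 0 < C)
    (G : EuclideanSpace ℝ (Fin d) → EuclideanSpace ℝ (Fin d) → ℝ≥0∞)
    (hGm : Measurable (Function.uncurry G))
    (hGb : ∀ x ∈ D, ∀ y ∈ D, x ≠ y →
      G x y ≤ ENNReal.ofReal (C * ‖x - y‖ ^ ((2 : ℝ) - d)))
    (ν : Measure ℝ) (hν0 : ν {0} = 0)
    (hν : ∫⁻ z, min (ENNReal.ofReal (z ^ 2)) 1 ∂ν < ⊤)
    (p : ℝ) (hp0 : 0 < p) (hpd : p < d / ((d : ℝ) - 2))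
    (hνp : ∫⁻ z in {z : ℝ | 0 < |z| ∧ |z| ≤ 1}, ENNReal.ofReal (|z| ^ p) ∂ν < ⊤) :
    ∀ x ∈ D,
      ∫⁻ y in D, ∫⁻ z, min ((ENNReal.ofReal |z| * G x y) ^ 2) 1 ∂ν ∂volume < ⊤ := by
  intro x hx
  have hd4 : (4 : ℝ) ≤ (d : ℝ) := by exact_mod_cast hd
  have hden : (0 : ℝ) < (d : ℝ) - 2 := by linarith
  have hp2 : p ≤ 2 := by
    have h2 : (d : ℝ) / ((d : ℝ) - 2) ≤ 2 := by
      rw [div_le_iff₀ hden]; linarith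
    linarith
  set S : Set ℝ := {z : ℝ | 0 < |z| ∧ |z| ≤ 1} with hS
  set T : Set ℝ := {z : ℝ | 1 < |z|} with hT
  set K : ℝ≥0∞ := ∫⁻ z in S, ENNReal.ofReal (|z| ^ p) ∂ν with hKdef
  -- finiteness of ν T
  have hνT : ν T < ⊤ := by
    have hTm : MeasurableSet T := measurableSet_lt measurable_const measurable_id.abs
    have h1 : ν T = ∫⁻ _ in T, 1 ∂ν := by rw [setLIntegral_one]
    rw [h1]
    refine lt_of_le_of_lt ?_ hν
    refine le_trans (setLIntegral_mono ?_ ?_) (setLIntegral_le_lintegral _ _)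
    · exact ((measurable_id.pow_const 2).ennreal_ofReal).min measurable_const
    · intro z hz
      have hz1 : (1 : ℝ) ≤ z ^ 2 := by
        have : 1 < |z| := hz
        nlinarith [sq_abs z, abs_nonneg z]
      exact le_min (ENNReal.one_le_ofReal.2 hz1) le_rfl
  -- pointwise bound for the inner integral
  have hinner : ∀ y : EuclideanSpace ℝ (Fin d),
      (∫⁻ z, min ((ENNReal.ofReal |z| * G x y) ^ 2) 1 ∂ν) ≤ K * G x y ^ p + ν T := by
    intro y
    set b := G x y with hb
    have hsplit : (Set.univ : Set ℝ) ⊆ {0} ∪ (S ∪ T) := by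
      intro z _
      rcases eq_or_ne z 0 with h | h
      · exact Or.inl h
      · rcases le_or_gt |z| 1 with h1 | h1
        · exact Or.inr (Or.inl ⟨abs_pos.2 h, h1⟩)
        · exact Or.inr (Or.inr h1)
    calc ∫⁻ z, min ((ENNReal.ofReal |z| * b) ^ 2) 1 ∂ν
        = ∫⁻ z in Set.univ, min ((ENNReal.ofReal |z| * b) ^ 2) 1 ∂ν :=
          (setLIntegral_univ _).symm
      _ ≤ ∫⁻ z in {0} ∪ (S ∪ T), min ((ENNReal.ofReal |z| * b) ^ 2) 1 ∂ν :=
          lintegral_mono_set hsplit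
      _ ≤ (∫⁻ z in {(0:ℝ)}, min ((ENNReal.ofReal |z| * b) ^ 2) 1 ∂ν) +
          ((∫⁻ z in S, min ((ENNReal.ofReal |z| * b) ^ 2) 1 ∂ν) +
           (∫⁻ z in T, min ((ENNReal.ofReal |z| * b) ^ 2) 1 ∂ν)) := by
          refine le_trans (lintegral_union_le _ _ _) ?_
          gcongr
          exact lintegral_union_le _ _ _
      _ ≤ 0 + (K * b ^ p + ν T) := by
          gcongr
          · refine le_trans (setLIntegral_mono measurable_const fun z _ => min_le_right _ _) ?_
            rw [setLIntegral_const]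
            simp [hν0]
          · calc ∫⁻ z in S, min ((ENNReal.ofReal |z| * b) ^ 2) 1 ∂ν
                ≤ ∫⁻ z in S, b ^ p * ENNReal.ofReal (|z| ^ p) ∂ν := by
                  refine setLIntegral_mono
                    (measurable_const.mul ((measurable_id.abs.pow_const p).ennreal_ofReal))
                    fun z _ => ?_
                  refine le_trans (min_sq_le_rpow hp0 hp2 _) ?_
                  rw [ENNReal.mul_rpow_of_nonneg _ _ hp0.le,
                    ENNReal.ofReal_rpow_of_nonneg (abs_nonneg z) hp0.le, mul_comm]
              _ = b ^ p * K := lintegral_const_mul _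
                    ((measurable_id.abs.pow_const p).ennreal_ofReal)
              _ = K * b ^ p := mul_comm _ _
          · refine le_trans (setLIntegral_mono measurable_const fun z _ => min_le_right _ _) ?_
            rw [setLIntegral_one]
      _ = K * b ^ p + ν T := by rw [zero_add]
  -- measurability of y ↦ G x y
  have hGmx : Measurable fun y => G x y := hGm.comp measurable_prodMk_left
  -- finiteness of ∫⁻ (G x y)^p over D
  have hGp : ∫⁻ y in D, G x y ^ p ∂volume < ⊤ := by
    obtain ⟨r, hr⟩ := hDb.subset_closedBall x
    set R : ℝ := max r 1 with hRdef
    have hR : 0 < R := lt_of_lt_of_le one_pos (le_max_right _ _)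
    have hDR : D ⊆ Metric.closedBall x R :=
      hr.trans (Metric.closedBall_subset_closedBall (le_max_left _ _))
    set s : ℝ := ((d : ℝ) - 2) * p with hsdef
    have hs0 : 0 < s := mul_pos hden hp0
    have hsd : s < d := by
      rw [hsdef]
      have := (lt_div_iff₀ hden).1 hpd
      linarith
    haveI : Nontrivial (EuclideanSpace ℝ (Fin d)) := by
      apply Module.nontrivial_of_finrank_pos (R := ℝ)
      rw [finrank_euclideanSpace_fin]; omega
    have hae : ∀ᵐ y ∂(volume : Measure (EuclideanSpace ℝ (Fin d))), y ≠ x := by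
      rw [ae_iff]
      have : {y : EuclideanSpace ℝ (Fin d) | ¬ y ≠ x} = {x} := by
        ext y; simp
      rw [this]
      exact measure_singleton x
    have hmono : ∫⁻ y in D, G x y ^ p ∂volume
        ≤ ∫⁻ y in D, ENNReal.ofReal (C ^ p) * ENNReal.ofReal (‖x - y‖ ^ (-s)) ∂volume := by
      refine setLIntegral_mono_ae
        (measurable_const.mul
          ((measurable_const.sub measurable_id').norm.pow_const _).ennreal_ofReal).aemeasurable
        ?_
      filter_upwards [hae] with y hy hyD
      have hxy : x ≠ y := fun h => hy h.symm
      have h1 : G x y ≤ ENNReal.ofReal (C * ‖x - y‖ ^ ((2 : ℝ) - d)) := hGb x hx y hyD hxy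
      have h2 : G x y ^ p ≤ (ENNReal.ofReal (C * ‖x - y‖ ^ ((2 : ℝ) - d))) ^ p :=
        ENNReal.rpow_le_rpow h1 hp0.le
      refine h2.trans (le_of_eq ?_)
      have hnorm : (0 : ℝ) < ‖x - y‖ := by
        rw [norm_pos_iff, sub_ne_zero]; exact hxy
      rw [ENNReal.ofReal_rpow_of_pos (by positivity),
        Real.mul_rpow hC.le (by positivity), ← Real.rpow_mul hnorm.le,
        ENNReal.ofReal_mul (by positivity)]
      congr 2
      rw [hsdef]; ring
    refine lt_of_le_of_lt hmono ?_
    rw [lintegral_const_mul _ (f := fun y => ENNReal.ofReal (‖x - y‖ ^ (-s))) ((measurable_const.sub measurable_id').norm.pow_const _).ennreal_ofReal]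
    refine ENNReal.mul_lt_top ofReal_lt_top ?_
    refine lt_of_le_of_lt (lintegral_mono_set hDR) ?_
    exact riesz_lt_top d (by omega) x R s hR hs0.le hsd
  -- put everything together
  have hg : Measurable fun y => K * G x y ^ p + ν T :=
    (measurable_const.mul (hGmx.pow_const p)).add measurable_const
  calc ∫⁻ y in D, ∫⁻ z, min ((ENNReal.ofReal |z| * G x y) ^ 2) 1 ∂ν ∂volume
      ≤ ∫⁻ y in D, (K * G x y ^ p + ν T) ∂volume :=
        setLIntegral_mono hg fun y _ => hinner y
    _ = K * (∫⁻ y in D, G x y ^ p ∂volume) + ν T * volume D := by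
        rw [lintegral_add_right _ measurable_const,
          lintegral_const_mul _ (hGmx.pow_const p), setLIntegral_const]
    _ < ⊤ := by
        refine ENNReal.add_lt_top.2 ⟨ENNReal.mul_lt_top hνp hGp, ENNReal.mul_lt_top hνT ?_⟩
        exact hDb.measure_lt_top
end

section
/- Let $D \subset \mathbb{R}^3$ be a bounded measurable set, let $C > 0$, and let $G : D \times D \to [0,\infty]$ be measurable with $G(x,y) \le C\,\|x-y\|^{-1}$ for all $x,y \in D$ with $x \neq y$. Let $\nu$ be any Lévy measure on $\mathbb{R}$ (i.e. $\nu(\{0\}) = 0$ and $\int_{\mathbb{R}}(|z|^2\wedge 1)\,\nu(dz) < \infty$). Then for every $x \in D$: (i) $\int_D G(x,y)^2\,dy < \infty$, and (ii) $\int_D \int_{\mathbb{R}} \bigl( |z\,G(x,y)|^2 \wedge 1 \bigr)\,\nu(dz)\,dy < \infty$. -/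
open MeasureTheory ENNReal Set

open Metric

local notation "E3" => EuclideanSpace ℝ (Fin 3)

lemma annuli_cover (x : E3) (R : ℝ) :
    closedBall x R ⊆ {x} ∪ ⋃ n : ℕ, {y : E3 | ‖y - x‖ ∈ Ioc (R / 2 ^ (n+1)) (R / 2 ^ n)} := by
  intro y hy
  rcases eq_or_ne y x with h | h
  · exact Or.inl h
  · refine Or.inr ?_
    have hr : 0 < ‖y - x‖ := norm_pos_iff.mpr (sub_ne_zero.mpr h)
    have hP : ∃ n : ℕ, R / 2 ^ (n+1) < ‖y - x‖ := by
      obtain ⟨n, hn⟩ := pow_unbounded_of_one_lt (R / ‖y - x‖) (one_lt_two)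
      refine ⟨n, ?_⟩
      rw [div_lt_iff₀ (by positivity)]
      rw [div_lt_iff₀ hr] at hn
      have h2 : (2:ℝ) ^ (n+1) = 2 * 2 ^ n := by ring
      nlinarith [pow_pos (zero_lt_two' ℝ) n]
    classical
    have hn : R / 2 ^ (Nat.find hP + 1) < ‖y - x‖ := Nat.find_spec hP
    have hub : ‖y - x‖ ≤ R / 2 ^ (Nat.find hP) := by
      rcases Nat.eq_zero_or_pos (Nat.find hP) with h0 | hpos
      · rw [h0]
        simpa using (mem_closedBall_iff_norm.mp hy)
      · obtain ⟨m, hm⟩ := Nat.exists_eq_succ_of_ne_zero hpos.ne'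
        have := Nat.find_min hP (m := m) (by omega)
        push_neg at this
        rw [hm]
        simpa using this
    exact mem_iUnion.mpr ⟨Nat.find hP, hn, hub⟩

lemma key_finite (x : E3) (R : ℝ) (hR : 0 < R) (C : ℝ) (hC : 0 < C) :
    ∫⁻ y in closedBall x R, ENNReal.ofReal (C * ‖x - y‖⁻¹) ^ 2 ∂volume < ⊤ := by
  classical
  set f : E3 → ℝ≥0∞ := fun y => ENNReal.ofReal (C * ‖x - y‖⁻¹) ^ 2 with hf
  set A : ℕ → Set E3 := fun n => {y : E3 | ‖y - x‖ ∈ Ioc (R / 2 ^ (n+1)) (R / 2 ^ n)} with hA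
  set V : ℝ≥0∞ := volume (ball (0 : E3) 1) with hV
  have hVlt : V < ⊤ := measure_ball_lt_top
  have hbound : ∀ n : ℕ, ∫⁻ y in A n, f y ∂volume ≤
      (ENNReal.ofReal (4 * C ^ 2 * R) * ENNReal.ofReal (1/2) ^ n) * V := by
    intro n
    have h2n : (0:ℝ) < 2 ^ n := by positivity
    have h2n1 : (0:ℝ) < 2 ^ (n+1) := by positivity
    have hstep : ∫⁻ y in A n, f y ∂volume ≤
        ENNReal.ofReal (C * (2 ^ (n+1) / R)) ^ 2 * volume (A n) := by
      rw [← setLIntegral_const]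
      refine setLIntegral_mono (by measurability) ?_
      intro y hy
      obtain ⟨hy1, hy2⟩ := hy
      have hnorm : ‖x - y‖ = ‖y - x‖ := norm_sub_rev x y
      have hipos : 0 < R / 2 ^ (n+1) := by positivity
      have hinv : ‖x - y‖⁻¹ ≤ 2 ^ (n+1) / R := by
        rw [hnorm]
        calc ‖y - x‖⁻¹ ≤ (R / 2 ^ (n+1))⁻¹ := by
              exact inv_anti₀ hipos hy1.le
        _ = 2 ^ (n+1) / R := by rw [inv_div]
      show ENNReal.ofReal (C * ‖x - y‖⁻¹) ^ 2 ≤ _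
      gcongr

    have hvol : volume (A n) ≤ ENNReal.ofReal ((R / 2 ^ n) ^ 3) * V := by
      have hsub : A n ⊆ closedBall x (R / 2 ^ n) := by
        intro y hy
        exact mem_closedBall_iff_norm.mpr hy.2
      calc volume (A n) ≤ volume (closedBall x (R / 2 ^ n)) := measure_mono hsub
      _ = ENNReal.ofReal ((R / 2 ^ n) ^ 3) * V := by
          rw [Measure.addHaar_closedBall _ _ (by positivity)]
          congr 1
          · norm_num [finrank_euclideanSpace_fin]
    calc ∫⁻ y in A n, f y ∂volume
        ≤ ENNReal.ofReal (C * (2 ^ (n+1) / R)) ^ 2 *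
            (ENNReal.ofReal ((R / 2 ^ n) ^ 3) * V) :=
          hstep.trans (mul_le_mul_right hvol _)
      _ = (ENNReal.ofReal (4 * C ^ 2 * R) * ENNReal.ofReal (1/2) ^ n) * V := by
          rw [← mul_assoc, ← ENNReal.ofReal_pow (by positivity), ← ENNReal.ofReal_mul (by positivity),
            ← ENNReal.ofReal_pow (by norm_num), ← ENNReal.ofReal_mul (by positivity)]
          congr 2
          rw [one_div_pow]
          field_simp
          ring
  have hcover := annuli_cover x R
  have hxnull : ∫⁻ y in {x}, f y ∂volume = 0 := by
    rw [Measure.restrict_eq_zero.mpr (measure_singleton x), lintegral_zero_measure]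
  calc ∫⁻ y in closedBall x R, f y ∂volume
      ≤ ∫⁻ y in {x} ∪ ⋃ n, A n, f y ∂volume := lintegral_mono_set hcover
    _ ≤ (∫⁻ y in {x}, f y ∂volume) + ∫⁻ y in ⋃ n, A n, f y ∂volume := lintegral_union_le _ _ _
    _ ≤ 0 + ∑' n, ∫⁻ y in A n, f y ∂volume := by
        rw [hxnull]; exact add_le_add le_rfl (lintegral_iUnion_le _ _)
    _ ≤ ∑' n, (ENNReal.ofReal (4 * C ^ 2 * R) * ENNReal.ofReal (1/2) ^ n) * V := by
        rw [zero_add]; exact ENNReal.tsum_le_tsum hbound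
    _ = (ENNReal.ofReal (4 * C ^ 2 * R) * V) * ∑' n, ENNReal.ofReal (1/2) ^ n := by
        rw [← ENNReal.tsum_mul_left]
        congr 1; ext n; ring
    _ < ⊤ := by
        rw [ENNReal.tsum_geometric]
        refine ENNReal.mul_lt_top (ENNReal.mul_lt_top ofReal_lt_top hVlt) ?_
        rw [lt_top_iff_ne_top]
        rw [Ne, ENNReal.inv_eq_top, tsub_eq_zero_iff_le]
        exact not_le.mpr (by simpa using ENNReal.ofReal_lt_one.mpr (by norm_num))

lemma min_mul_le_aux (a b : ℝ≥0∞) : min (a * b) 1 ≤ max b 1 * min a 1 := by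
  rcases le_total b 1 with hb | hb
  · rw [max_eq_right hb]
    rw [one_mul]
    exact min_le_min (by exact mul_le_of_le_one_right' hb) le_rfl
  · rw [max_eq_left hb]
    rcases le_total a 1 with ha | ha
    · rw [min_eq_left ha]
      exact (min_le_left _ _).trans (le_of_eq (mul_comm a b))
    · rw [min_eq_right ha, mul_one]
      exact (min_le_right _ _).trans hb

/-- For a bounded measurable `D ⊆ ℝ³`, a kernel `G` dominated by `C‖x-y‖⁻¹`
off the diagonal, and any Lévy measure `ν` on `ℝ`, for every `x ∈ D`:
(i) `∫_D G(x,y)² dy < ∞`, and (ii) `∫_D ∫_ℝ (|z G(x,y)|² ∧ 1) ν(dz) dy < ∞`. -/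
theorem stmt_4
    (D : Set (EuclideanSpace ℝ (Fin 3)))
    (hDm : MeasurableSet D) (hDb : Bornology.IsBounded D)
    (C : ℝ) (hC : 0 < C)
    (G : EuclideanSpace ℝ (Fin 3) → EuclideanSpace ℝ (Fin 3) → ℝ≥0∞)
    (hGm : Measurable (Function.uncurry G))
    (hGb : ∀ x ∈ D, ∀ y ∈ D, x ≠ y →
      G x y ≤ ENNReal.ofReal (C * ‖x - y‖⁻¹))
    (ν : Measure ℝ) (hν0 : ν {0} = 0)
    (hν : ∫⁻ z, min (ENNReal.ofReal (z ^ 2)) 1 ∂ν < ⊤) :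
    ∀ x ∈ D,
      (∫⁻ y in D, G x y ^ 2 ∂volume) < ⊤ ∧
      (∫⁻ y in D, ∫⁻ z, min ((ENNReal.ofReal |z| * G x y) ^ 2) 1 ∂ν ∂volume) < ⊤ := by
  intro x hx
  obtain ⟨R₀, hR₀⟩ := hDb.subset_closedBall x
  set R : ℝ := max R₀ 1 with hRdef
  have hR : 0 < R := lt_of_lt_of_le one_pos (le_max_right _ _)
  have hDR : D ⊆ Metric.closedBall x R :=
    hR₀.trans (Metric.closedBall_subset_closedBall (le_max_left _ _))
  have hvolD : volume D < ⊤ :=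
    lt_of_le_of_lt (measure_mono hDR) measure_closedBall_lt_top
  have hne : ∀ᵐ (y : E3) ∂volume, y ≠ x := by
    rw [ae_iff]
    simpa [Set.setOf_eq_eq_singleton] using measure_singleton (μ := (volume : Measure E3)) x
  have hae : ∀ᵐ y ∂(volume.restrict D), G x y ^ 2 ≤ ENNReal.ofReal (C * ‖x - y‖⁻¹) ^ 2 := by
    filter_upwards [ae_restrict_mem hDm, ae_restrict_of_ae hne] with y hyD hyx
    gcongr
    exact hGb x hx y hyD (Ne.symm hyx)
  have hi : (∫⁻ y in D, G x y ^ 2 ∂volume) < ⊤ := by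
    calc ∫⁻ y in D, G x y ^ 2 ∂volume
        ≤ ∫⁻ y in D, ENNReal.ofReal (C * ‖x - y‖⁻¹) ^ 2 ∂volume := lintegral_mono_ae hae
      _ ≤ ∫⁻ y in Metric.closedBall x R, ENNReal.ofReal (C * ‖x - y‖⁻¹) ^ 2 ∂volume :=
          lintegral_mono_set hDR
      _ < ⊤ := key_finite x R hR C hC
  refine ⟨hi, ?_⟩
  set K : ℝ≥0∞ := ∫⁻ z, min (ENNReal.ofReal (z ^ 2)) 1 ∂ν with hK
  have hmul : ∀ y, (∫⁻ z, min ((ENNReal.ofReal |z| * G x y) ^ 2) 1 ∂ν) ≤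
      max (G x y ^ 2) 1 * K := by
    intro y
    calc ∫⁻ z, min ((ENNReal.ofReal |z| * G x y) ^ 2) 1 ∂ν
        ≤ ∫⁻ z, max (G x y ^ 2) 1 * min (ENNReal.ofReal (z ^ 2)) 1 ∂ν := by
          refine lintegral_mono fun z => ?_
          have h1 : (ENNReal.ofReal |z| * G x y) ^ 2 = ENNReal.ofReal (z ^ 2) * G x y ^ 2 := by
            rw [mul_pow, ← ENNReal.ofReal_pow (abs_nonneg z), sq_abs]
          rw [h1]
          exact min_mul_le_aux _ _
      _ = max (G x y ^ 2) 1 * K := lintegral_const_mul _ (by measurability)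
  have hGxm : Measurable fun y => G x y := hGm.of_uncurry_left
  calc ∫⁻ y in D, ∫⁻ z, min ((ENNReal.ofReal |z| * G x y) ^ 2) 1 ∂ν ∂volume
      ≤ ∫⁻ y in D, (G x y ^ 2 + 1) * K ∂volume := by
        refine lintegral_mono fun y => (hmul y).trans (mul_le_mul_left ?_ K)
        exact max_le (self_le_add_right _ _) (le_add_self)
    _ = (∫⁻ y in D, (G x y ^ 2 + 1) ∂volume) * K :=
        lintegral_mul_const K ((hGxm.pow_const 2).add measurable_const)
    _ = ((∫⁻ y in D, G x y ^ 2 ∂volume) + volume D) * K := by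
        rw [lintegral_add_right _ measurable_const, setLIntegral_const, one_mul]
    _ < ⊤ := ENNReal.mul_lt_top (ENNReal.add_lt_top.mpr ⟨hi, hvolD⟩) hν
end

section
/- Let $(X, \mathcal{A}, \mu)$ be a measure space and let $(e_k)_{k \ge 1}$ be an orthonormal family in the real Hilbert space $L^2(X, \mu)$. Let $(\lambda_k)_{k \ge 1}$ be reals with $\lambda_k \ge \lambda_* > 0$, let $(b_k)_{k \ge 1}$ be reals, and let $C > 0$, $\theta > 0$ be such that $\sum_{k : \lambda_k \le t} b_k^2 \le C\,t^{\theta}$ for all $t > 0$. Then for every $\gamma > \theta/2$, the series $\sum_{k=1}^{\infty} \frac{b_k}{\lambda_k^{\gamma}}\, e_k$ converges in $L^2(X,\mu)$, and its limit $g$ satisfies $\|g\|_{L^2(X,\mu)}^2 = \sum_{k=1}^{\infty} \frac{b_k^2}{\lambda_k^{2\gamma}} \le \frac{2\gamma\,C}{2\gamma - \theta}\,\lambda_*^{\theta - 2\gamma}$. -/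
open MeasureTheory Finset

-- Lemma A: the elementary rpow inequality
lemma ineqA {θ α x y : ℝ} (hθ : 0 < θ) (hθα : θ < α) (hx : 0 < x) (hxy : x ≤ y) :
    x ^ θ * (x ^ (-α) - y ^ (-α)) ≤ α / (α - θ) * (x ^ (θ - α) - y ^ (θ - α)) := by
  have hy : 0 < y := hx.trans_le hxy
  set β : ℝ := α - θ with hβ
  have hβ0 : 0 < β := by simp only [hβ]; linarith
  have hs : 0 < x / y := div_pos hx hy
  set K : ℝ := α / β with hK
  have hK1 : (1 : ℝ) ≤ K := by
    rw [hK, le_div_iff₀ hβ0]; linarith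
  -- Bernoulli
  have hber : 1 + K * ((x / y) ^ β - 1) ≤ (x / y) ^ α := by
    have h1 : -1 ≤ (x / y) ^ β - 1 := by
      have := Real.rpow_nonneg hs.le β; linarith
    have h := one_add_mul_self_le_rpow_one_add h1 hK1
    have hrw : (1 + ((x / y) ^ β - 1)) ^ K = (x / y) ^ α := by
      rw [show (1 + ((x / y) ^ β - 1)) = (x / y) ^ β by ring,
        ← Real.rpow_mul hs.le]
      congr 1
      rw [hK]; field_simp [hβ0.ne']
    rw [hrw] at h
    linarith
  -- abbreviations
  have hdivα : (x / y) ^ α = x ^ α / y ^ α := Real.div_rpow hx.le hy.le α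
  have hdivβ : (x / y) ^ β = x ^ β / y ^ β := Real.div_rpow hx.le hy.le β
  set A := x ^ α with hA
  set A' := y ^ α
  set B := x ^ β
  set B' := y ^ β
  have hApos : 0 < A := Real.rpow_pos_of_pos hx α
  have hA'pos : 0 < A' := Real.rpow_pos_of_pos hy α
  have hBpos : 0 < B := Real.rpow_pos_of_pos hx β
  have hB'pos : 0 < B' := Real.rpow_pos_of_pos hy β
  have h1 : 1 + K * (B / B' - 1) ≤ A / A' := by
    rw [hdivα, hdivβ] at hber; exact hber
  have hxθ : x ^ θ = A / B := by
    rw [hA, eq_div_iff hBpos.ne', ← Real.rpow_add hx]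
    rw [hβ]; ring
  have hxnegα : x ^ (-α) = 1 / A := by
    rw [Real.rpow_neg hx.le, one_div]
  have hynegα : y ^ (-α) = 1 / A' := by
    rw [Real.rpow_neg hy.le, one_div]
  have hxθα : x ^ (θ - α) = 1 / B := by
    rw [show θ - α = -β by rw [hβ]; ring, Real.rpow_neg hx.le, one_div]
  have hyθα : y ^ (θ - α) = 1 / B' := by
    rw [show θ - α = -β by rw [hβ]; ring, Real.rpow_neg hy.le, one_div]
  rw [hxθ, hxnegα, hynegα, hxθα, hyθα]
  have h2 : 1 - A / A' ≤ K - K * (B / B') := by linarith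
  calc A / B * (1 / A - 1 / A') = (1 / B) * (1 - A / A') := by
        field_simp
    _ ≤ (1 / B) * (K - K * (B / B')) := by
        apply mul_le_mul_of_nonneg_left h2 (by positivity)
    _ = K * (1 / B - 1 / B') := by field_simp

/-- If `(e_k)` is an orthonormal family in the real Hilbert space `L²(X,μ)`,
`λ_k ≥ λ_* > 0`, and `∑_{λ_k ≤ t} b_k² ≤ C t^θ` for all `t > 0`, then for `γ > θ/2` the
series `∑ (b_k/λ_k^γ) e_k` converges in `L²(X,μ)` and its limit `g` satisfies
`‖g‖² = ∑ b_k²/λ_k^{2γ} ≤ 2γC/(2γ-θ) · λ_*^{θ-2γ}`. -/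
theorem stmt_7
    {X : Type*} [MeasurableSpace X] (μ : Measure X)
    (e : ℕ → MeasureTheory.Lp ℝ 2 μ) (he : Orthonormal ℝ e)
    (lam : ℕ → ℝ) (lamStar : ℝ) (hlamStar : 0 < lamStar) (hlam : ∀ k, lamStar ≤ lam k)
    (b : ℕ → ℝ)
    (C θ : ℝ) (hC : 0 < C) (hθ : 0 < θ)
    (hsum : ∀ t : ℝ, 0 < t → ∀ F : Finset ℕ, (∀ k ∈ F, lam k ≤ t) →
      ∑ k ∈ F, (b k) ^ 2 ≤ C * t ^ θ)
    (γ : ℝ) (hγ : θ / 2 < γ) :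
    ∃ g : MeasureTheory.Lp ℝ 2 μ,
      HasSum (fun k => (b k / lam k ^ γ) • e k) g ∧
      Summable (fun k => b k ^ 2 / lam k ^ (2 * γ)) ∧
      ‖g‖ ^ 2 = ∑' k, b k ^ 2 / lam k ^ (2 * γ) ∧
      ∑' k, b k ^ 2 / lam k ^ (2 * γ) ≤ 2 * γ * C / (2 * γ - θ) * lamStar ^ (θ - 2 * γ) := by
  classical
  set α : ℝ := 2 * γ with hα
  have hθα : θ < α := by simp only [hα]; linarith
  have hα0 : 0 < α := hθ.trans hθα
  set K : ℝ := α / (α - θ) with hK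
  have hK1 : (1 : ℝ) ≤ K := by
    rw [hK, le_div_iff₀ (by linarith)]; linarith
  have hlampos : ∀ k, 0 < lam k := fun k => hlamStar.trans_le (hlam k)
  -- rewrite terms
  have hterm : ∀ k, b k ^ 2 / lam k ^ α = b k ^ 2 * lam k ^ (-α) := by
    intro k
    rw [Real.rpow_neg (hlampos k).le, div_eq_mul_inv]
  -- Lemma B by strong induction on card
  have lemB : ∀ n : ℕ, ∀ F : Finset ℕ, F.card ≤ n → ∀ T : ℝ, lamStar ≤ T →
      (∀ k ∈ F, lam k ≤ T) →
      ∑ k ∈ F, b k ^ 2 * (lam k ^ (-α) - T ^ (-α)) ≤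
        K * C * (lamStar ^ (θ - α) - T ^ (θ - α)) := by
    intro n
    induction n with
    | zero =>
      intro F hF T hT _
      rw [Finset.card_eq_zero.1 (Nat.le_zero.1 hF), Finset.sum_empty]
      have h1 : T ^ (θ - α) ≤ lamStar ^ (θ - α) :=
        Real.rpow_le_rpow_of_nonpos hlamStar hT (by linarith)
      have : (0:ℝ) ≤ K * C := by positivity
      nlinarith
    | succ n ih =>
      intro F hF T hT hFT
      rcases F.eq_empty_or_nonempty with rfl | hFne
      · exact ih ∅ (by simp) T hT (by simp)
      set M : ℝ := F.sup' hFne lam with hM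
      have hMmem : ∃ k ∈ F, lam k = M := by
        obtain ⟨k, hk, hkM⟩ := F.exists_mem_eq_sup' hFne lam
        exact ⟨k, hk, hkM.symm⟩
      have hMstar : lamStar ≤ M := by
        obtain ⟨k, hk, hkM⟩ := hMmem; rw [← hkM]; exact hlam k
      have hMpos : 0 < M := hlamStar.trans_le hMstar
      have hMT : M ≤ T := by
        obtain ⟨k, hk, hkM⟩ := hMmem; rw [← hkM]; exact hFT k hk
      have hlamM : ∀ k ∈ F, lam k ≤ M := fun k hk => Finset.le_sup' lam hk
      set F' : Finset ℕ := F.filter (fun k => lam k < M) with hF'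
      have hF'card : F'.card ≤ n := by
        obtain ⟨k, hk, hkM⟩ := hMmem
        have hss : F' ⊆ F := Finset.filter_subset _ _
        have : F'.card < F.card := by
          apply Finset.card_lt_card
          refine ⟨hss, fun hsub => ?_⟩
          have := (Finset.mem_filter.1 (hsub hk)).2
          rw [hkM] at this
          exact absurd this (lt_irrefl M)
        omega
      -- split the sum
      have hsplit : ∑ k ∈ F, b k ^ 2 * (lam k ^ (-α) - T ^ (-α)) =
          (∑ k ∈ F, b k ^ 2 * (lam k ^ (-α) - M ^ (-α))) +
          (∑ k ∈ F, b k ^ 2) * (M ^ (-α) - T ^ (-α)) := by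
        rw [Finset.sum_mul, ← Finset.sum_add_distrib]
        apply Finset.sum_congr rfl
        intro k _; ring
      have hfirst : ∑ k ∈ F, b k ^ 2 * (lam k ^ (-α) - M ^ (-α)) =
          ∑ k ∈ F', b k ^ 2 * (lam k ^ (-α) - M ^ (-α)) := by
        symm
        apply Finset.sum_subset (Finset.filter_subset _ _)
        intro k hk hk'
        have : ¬ lam k < M := by
          intro h; exact hk' (Finset.mem_filter.2 ⟨hk, h⟩)
        have : lam k = M := le_antisymm (hlamM k hk) (not_lt.1 this)
        rw [this]; ring
      have hIH : ∑ k ∈ F', b k ^ 2 * (lam k ^ (-α) - M ^ (-α)) ≤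
          K * C * (lamStar ^ (θ - α) - M ^ (θ - α)) := by
        apply ih F' hF'card M hMstar
        intro k hk
        exact (hlamM k (Finset.filter_subset _ _ hk))
      have hS : ∑ k ∈ F, b k ^ 2 ≤ C * M ^ θ := hsum M hMpos F hlamM
      have hMT' : 0 ≤ M ^ (-α) - T ^ (-α) := by
        have := Real.rpow_le_rpow_of_nonpos hMpos hMT (by linarith : -α ≤ 0)
        linarith
      have hsecond : (∑ k ∈ F, b k ^ 2) * (M ^ (-α) - T ^ (-α)) ≤
          K * C * (M ^ (θ - α) - T ^ (θ - α)) := by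
        calc (∑ k ∈ F, b k ^ 2) * (M ^ (-α) - T ^ (-α))
            ≤ (C * M ^ θ) * (M ^ (-α) - T ^ (-α)) :=
              mul_le_mul_of_nonneg_right hS hMT'
          _ = C * (M ^ θ * (M ^ (-α) - T ^ (-α))) := by ring
          _ ≤ C * (K * (M ^ (θ - α) - T ^ (θ - α))) := by
              apply mul_le_mul_of_nonneg_left _ hC.le
              exact ineqA hθ hθα hMpos hMT
          _ = K * C * (M ^ (θ - α) - T ^ (θ - α)) := by ring
      rw [hsplit, hfirst]
      calc _ ≤ K * C * (lamStar ^ (θ - α) - M ^ (θ - α)) +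
            K * C * (M ^ (θ - α) - T ^ (θ - α)) := add_le_add hIH hsecond
        _ = K * C * (lamStar ^ (θ - α) - T ^ (θ - α)) := by ring
  -- uniform bound on partial sums
  have hbound : ∀ F : Finset ℕ, ∑ k ∈ F, b k ^ 2 / lam k ^ α ≤
      K * C * lamStar ^ (θ - α) := by
    intro F
    rcases F.eq_empty_or_nonempty with rfl | hFne
    · simp; positivity
    set T : ℝ := F.sup' hFne lam with hT
    have hTstar : lamStar ≤ T := by
      obtain ⟨k, hk, hkT⟩ := F.exists_mem_eq_sup' hFne lam
      rw [hT, hkT]; exact hlam k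
    have hTpos : 0 < T := hlamStar.trans_le hTstar
    have hlamT : ∀ k ∈ F, lam k ≤ T := fun k hk => Finset.le_sup' lam hk
    have hB := lemB F.card F le_rfl T hTstar hlamT
    have hS : ∑ k ∈ F, b k ^ 2 ≤ C * T ^ θ := hsum T hTpos F hlamT
    have hsplit : ∑ k ∈ F, b k ^ 2 / lam k ^ α =
        (∑ k ∈ F, b k ^ 2 * (lam k ^ (-α) - T ^ (-α))) +
        (∑ k ∈ F, b k ^ 2) * T ^ (-α) := by
      rw [Finset.sum_mul, ← Finset.sum_add_distrib]
      apply Finset.sum_congr rfl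
      intro k _
      rw [hterm k]; ring
    have hTθα : C * T ^ θ * T ^ (-α) = C * T ^ (θ - α) := by
      rw [mul_assoc, ← Real.rpow_add hTpos]
      ring_nf
    have hTnonneg : (0:ℝ) ≤ T ^ (-α) := Real.rpow_nonneg hTpos.le _
    have hTθαnn : (0:ℝ) ≤ T ^ (θ - α) := Real.rpow_nonneg hTpos.le _
    have h2 : (∑ k ∈ F, b k ^ 2) * T ^ (-α) ≤ C * T ^ (θ - α) := by
      rw [← hTθα]
      exact mul_le_mul_of_nonneg_right hS hTnonneg
    rw [hsplit]
    nlinarith [hB, h2, mul_nonneg (sub_nonneg.2 hK1) (mul_nonneg hC.le hTθαnn)]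
  -- summability of the squares
  have hnonneg : ∀ k, (0:ℝ) ≤ b k ^ 2 / lam k ^ α := by
    intro k
    have := Real.rpow_pos_of_pos (hlampos k) α
    positivity
  have hsummable : Summable (fun k => b k ^ 2 / lam k ^ α) :=
    summable_of_sum_le hnonneg hbound
  have htsum_le : ∑' k, b k ^ 2 / lam k ^ α ≤ α * C / (α - θ) * lamStar ^ (θ - α) := by
    have h := Summable.tsum_le_of_sum_le hsummable hbound
    have : K * C * lamStar ^ (θ - α) = α * C / (α - θ) * lamStar ^ (θ - α) := by
      rw [hK]; ring
    linarith
  -- relate the coefficients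
  set c : ℕ → ℝ := fun k => b k / lam k ^ γ with hc
  have hcsq : ∀ k, c k ^ 2 = b k ^ 2 / lam k ^ α := by
    intro k
    rw [hc]
    simp only
    rw [div_pow, hα]
    congr 1
    rw [two_mul, Real.rpow_add (hlampos k), sq]
  -- summability of the series in L²
  have hV := he.orthogonalFamily
  have hsummable2 : Summable (fun k => c k • e k) := by
    rw [show (fun k => c k • e k) =
        (fun k => (LinearIsometry.toSpanSingleton ℝ _ (he.1 k)) (c k)) from rfl]
    rw [hV.summable_iff_norm_sq_summable]
    apply hsummable.congr
    intro k
    rw [Real.norm_eq_abs, sq_abs, hcsq k]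
  obtain ⟨g, hg⟩ := hsummable2
  refine ⟨g, hg, hsummable, ?_, htsum_le⟩
  -- norm identity
  have hnormsum : ∀ s : Finset ℕ, ‖∑ k ∈ s, c k • e k‖ ^ 2 = ∑ k ∈ s, c k ^ 2 := by
    intro s
    have := hV.norm_sum c s
    simpa [Real.norm_eq_abs, sq_abs] using this
  have h1 : Filter.Tendsto (fun s : Finset ℕ => ∑ k ∈ s, c k ^ 2)
      Filter.atTop (nhds (‖g‖ ^ 2)) := by
    have : Filter.Tendsto (fun s : Finset ℕ => ‖∑ k ∈ s, c k • e k‖ ^ 2)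
        Filter.atTop (nhds (‖g‖ ^ 2)) := by
      exact ((continuous_norm.pow 2).continuousAt).tendsto.comp hg
    apply this.congr
    intro s
    exact hnormsum s
  have h2 : Filter.Tendsto (fun s : Finset ℕ => ∑ k ∈ s, c k ^ 2)
      Filter.atTop (nhds (∑' k, b k ^ 2 / lam k ^ α)) := by
    have hs2 : Summable (fun k => c k ^ 2) := by
      apply hsummable.congr; intro k; rw [hcsq k]
    have := hs2.hasSum
    rw [show ∑' k, c k ^ 2 = ∑' k, b k ^ 2 / lam k ^ α from
      tsum_congr fun k => hcsq k] at this
    exact this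
  exact tendsto_nhds_unique h1 h2
end
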